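/- Let κ be an infinite cardinal. In the category whose objects are linear orders possessing a greatest element and whose morphisms are strictly monotone maps (which are not required to preserve the greatest element), the diagram whose objects are the ordinals α < κ and whose morphisms are the inclusions α ↪ β for α ≤ β has no colimit: there is no linear order L with a greatest element together with strictly monotone maps h_α : α → L satisfying h_β ∘ (inclusion of α into β) = h_α for all α ≤ β < κ, such that every compatible family of strictly monotone maps from the ordinals α < κ to a linear order with a greatest element factors through (L, (h_α)) via a unique strictly monotone map. -/

import Mathlib

open Cardinal

universe u

/-- Let `κ` be an infinite cardinal.  In the category whose objects are
linear orders possessing a greatest element and whose morphisms are strictly monotone maps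
(not required to preserve the greatest element), the diagram of the ordinals `α < κ` with
the inclusions `α ↪ β` has no colimit: there is no linear order `L` with a greatest element
`t`, together with compatible strictly monotone maps `h_α : α → L`, through which every
compatible family of strictly monotone maps from the ordinals `α < κ` to a linear order
with a greatest element factors via a unique strictly monotone map. -/
theorem stmt_5 (κ : Cardinal.{u}) (hκ : ℵ₀ ≤ κ) :
    ¬ ∃ (L : Type u) (_ : LinearOrder L) (t : L)
        (h : ∀ α : Ordinal.{u}, α < κ.ord → ({x : Ordinal.{u} // x < α} → L)),
        (∀ y : L, y ≤ t) ∧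
        (∀ α (hα : α < κ.ord), StrictMono (h α hα)) ∧
        (∀ α β (hα : α < κ.ord) (hβ : β < κ.ord) (hαβ : α ≤ β)
          (x : {x : Ordinal.{u} // x < α}),
            h β hβ ⟨x.1, lt_of_lt_of_le x.2 hαβ⟩ = h α hα x) ∧
        (∀ (L' : Type u) [LinearOrder L'] (t' : L'), (∀ y : L', y ≤ t') →
          ∀ h' : ∀ α : Ordinal.{u}, α < κ.ord → ({x : Ordinal.{u} // x < α} → L'),
            (∀ α (hα : α < κ.ord), StrictMono (h' α hα)) →
            (∀ α β (hα : α < κ.ord) (hβ : β < κ.ord) (hαβ : α ≤ β)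
              (x : {x : Ordinal.{u} // x < α}),
                h' β hβ ⟨x.1, lt_of_lt_of_le x.2 hαβ⟩ = h' α hα x) →
            ∃! H : L → L',
              StrictMono H ∧
                ∀ α (hα : α < κ.ord) (x : {x : Ordinal.{u} // x < α}),
                  H (h α hα x) = h' α hα x) := by
  rintro ⟨L, _, t, h, htop, hmono, hcompat, huniv⟩
  have lt1 : ∀ {a b : Ordinal.{u}}, a < b + 1 ↔ a ≤ b := fun {a b} => by
    rw [Ordinal.add_one_eq_succ]; exact Order.lt_succ_iff
  have two_eq : ∀ a : Ordinal.{u}, (a + 1) + 1 = a + 2 := fun a => by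
    rw [add_assoc]; norm_num
  have holim : Order.IsSuccLimit κ.ord := Cardinal.isSuccLimit_ord hκ
  have ho1 : κ.ord < κ.ord + 1 := lt1.mpr le_rfl
  have ho2 : κ.ord + 1 < κ.ord + 2 := by
    rw [← two_eq]; exact lt1.mpr le_rfl
  let ι₁ : Set.Iio (κ.ord + 1) ≃o (κ.ord + 1).ToType := Ordinal.ToType.mk (o := κ.ord + 1)
  let ι₂ : Set.Iio (κ.ord + 2) ≃o (κ.ord + 2).ToType := Ordinal.ToType.mk (o := κ.ord + 2)
  let f₁ : ∀ x : Ordinal.{u}, x < κ.ord + 1 → (κ.ord + 1).ToType := fun x hx => ι₁ ⟨x, hx⟩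
  let f₂ : ∀ x : Ordinal.{u}, x < κ.ord + 2 → (κ.ord + 2).ToType := fun x hx => ι₂ ⟨x, hx⟩
  have hf₁lt : ∀ {x y : Ordinal.{u}} {hx hy}, x < y → f₁ x hx < f₁ y hy := by
    intro x y hx hy hxy
    exact ι₁.strictMono (show (⟨x, hx⟩ : Set.Iio (κ.ord+1)) < ⟨y, hy⟩ from hxy)
  have hf₂lt : ∀ {x y : Ordinal.{u}} {hx hy}, x < y → f₂ x hx < f₂ y hy := by
    intro x y hx hy hxy
    exact ι₂.strictMono (show (⟨x, hx⟩ : Set.Iio (κ.ord+2)) < ⟨y, hy⟩ from hxy)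
  -- first target: toType (κ.ord+1)
  have key1 := huniv ((κ.ord + 1).ToType) (f₁ κ.ord ho1)
    (fun y => by
      have h1 : (ι₁.symm y).1 ≤ κ.ord := lt1.mp (ι₁.symm y).2
      calc y = ι₁ (ι₁.symm y) := (ι₁.apply_symm_apply y).symm
        _ ≤ f₁ κ.ord ho1 :=
            ι₁.monotone (show ((ι₁.symm y) : Set.Iio (κ.ord+1)) ≤ ⟨κ.ord, ho1⟩ from h1))
    (fun α hα x => f₁ x.1 ((x.2.trans hα).trans ho1))
    (fun α hα a b hab => hf₁lt (show a.1 < b.1 from hab))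
    (fun α β hα hβ hαβ x => rfl)
  obtain ⟨H₀, ⟨H₀mono, H₀h⟩, -⟩ := key1
  -- second target: toType (κ.ord+2)
  have key2 := huniv ((κ.ord + 2).ToType) (f₂ (κ.ord + 1) ho2)
    (fun y => by
      have h1 : (ι₂.symm y).1 ≤ κ.ord + 1 := by
        have h2 := (ι₂.symm y).2
        rw [Set.mem_Iio] at h2
        exact lt1.mp (lt_of_lt_of_eq h2 (two_eq κ.ord).symm)
      calc y = ι₂ (ι₂.symm y) := (ι₂.apply_symm_apply y).symm
        _ ≤ f₂ (κ.ord + 1) ho2 :=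
            ι₂.monotone (show ((ι₂.symm y) : Set.Iio (κ.ord+2)) ≤ ⟨κ.ord + 1, ho2⟩ from h1))
    (fun α hα x => f₂ x.1 ((x.2.trans hα).trans (ho1.trans ho2)))
    (fun α hα a b hab => hf₂lt (show a.1 < b.1 from hab))
    (fun α β hα hβ hαβ x => rfl)
  obtain ⟨H', -, huniq⟩ := key2
  -- two maps g₁ g₂ : toType (κ.ord+1) → toType (κ.ord+2)
  let g₁ : (κ.ord + 1).ToType → (κ.ord + 2).ToType := fun y =>
    f₂ (ι₁.symm y).1 ((ι₁.symm y).2.trans ho2)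
  let g₂ : (κ.ord + 1).ToType → (κ.ord + 2).ToType := fun y =>
    if (ι₁.symm y).1 = κ.ord then f₂ (κ.ord + 1) ho2
    else f₂ (ι₁.symm y).1 ((ι₁.symm y).2.trans ho2)
  have g₁mono : StrictMono g₁ := by
    intro y y' hyy'
    exact hf₂lt (show (ι₁.symm y).1 < (ι₁.symm y').1 from ι₁.symm.strictMono hyy')
  have g₂mono : StrictMono g₂ := by
    intro y y' hyy'
    have hab : (ι₁.symm y).1 < (ι₁.symm y').1 := ι₁.symm.strictMono hyy'
    have hane : (ι₁.symm y).1 ≠ κ.ord := by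
      intro he
      have hlt : κ.ord < (ι₁.symm y').1 := lt_of_le_of_lt (le_of_eq he.symm) hab
      exact absurd (lt1.mp (ι₁.symm y').2) (not_le_of_gt hlt)
    show g₂ y < g₂ y'
    simp only [g₂, if_neg hane]
    by_cases hb : (ι₁.symm y').1 = κ.ord
    · rw [if_pos hb]
      exact hf₂lt ((hab.trans_eq hb).trans ho1)
    · rw [if_neg hb]
      exact hf₂lt hab
  have hψf₁ : ∀ (x : Ordinal.{u}) (hx : x < κ.ord + 1), ι₁.symm (f₁ x hx) = ⟨x, hx⟩ :=
    fun x hx => ι₁.symm_apply_apply _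
  -- both g₁ ∘ H₀ and g₂ ∘ H₀ satisfy the cocone property
  have prop : ∀ g : (κ.ord + 1).ToType → (κ.ord + 2).ToType, StrictMono g →
      (∀ x (hx : x < κ.ord), g (f₁ x (hx.trans ho1)) = f₂ x (hx.trans (ho1.trans ho2))) →
      StrictMono (g ∘ H₀) ∧ ∀ α (hα : α < κ.ord) (x : {x : Ordinal.{u} // x < α}),
        (g ∘ H₀) (h α hα x) = f₂ x.1 ((x.2.trans hα).trans (ho1.trans ho2)) := by
    intro g gmono gf
    refine ⟨gmono.comp H₀mono, fun α hα x => ?_⟩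
    show g (H₀ (h α hα x)) = _
    rw [H₀h α hα x]
    exact gf x.1 (x.2.trans hα)
  have p₁ := prop g₁ g₁mono (by
    intro x hx
    show f₂ (ι₁.symm (f₁ x _)).1 _ = _
    simp only [hψf₁])
  have p₂ := prop g₂ g₂mono (by
    intro x hx
    show (if (ι₁.symm (f₁ x _)).1 = κ.ord then _ else _) = _
    simp only [hψf₁]
    rw [if_neg (ne_of_lt hx)])
  have e₁ := huniq (g₁ ∘ H₀) p₁
  have e₂ := huniq (g₂ ∘ H₀) p₂
  have heq : g₁ (H₀ t) = g₂ (H₀ t) := congrFun (e₁.trans e₂.symm) t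
  -- show H₀ t = f₁ κ.ord
  have hH₀t : H₀ t = f₁ κ.ord ho1 := by
    have hu : ∀ x, x < κ.ord → x < (ι₁.symm (H₀ t)).1 := by
      intro x hx
      have hx1 : x + 1 < κ.ord := by
        rw [Ordinal.add_one_eq_succ]; exact holim.succ_lt hx
      have hx2 : x + 2 < κ.ord := by
        rw [← two_eq, Ordinal.add_one_eq_succ]; exact holim.succ_lt hx1
      have hxlt1 : x < x + 1 := lt1.mpr le_rfl
      have h1lt2 : x + 1 < x + 2 := by rw [← two_eq]; exact lt1.mpr le_rfl
      have hxlt2 : x < x + 2 := hxlt1.trans h1lt2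
      have hlt : h (x + 2) hx2 ⟨x, hxlt2⟩ < h (x + 2) hx2 ⟨x + 1, h1lt2⟩ :=
        hmono (x + 2) hx2
          (show (⟨x, hxlt2⟩ : {y : Ordinal.{u} // y < x + 2}) < ⟨x + 1, h1lt2⟩ from hxlt1)
      have het : h (x + 2) hx2 ⟨x, hxlt2⟩ < t := lt_of_lt_of_le hlt (htop _)
      have h3 := H₀mono het
      rw [H₀h (x + 2) hx2 ⟨x, hxlt2⟩] at h3
      have h4 := ι₁.symm.strictMono h3
      rw [hψf₁] at h4
      exact h4
    have hle : (ι₁.symm (H₀ t)).1 ≤ κ.ord := lt1.mp (ι₁.symm (H₀ t)).2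
    have hge : κ.ord ≤ (ι₁.symm (H₀ t)).1 := by
      by_contra hc
      push_neg at hc
      exact absurd (hu _ hc) (lt_irrefl _)
    have huo : ι₁.symm (H₀ t) = ⟨κ.ord, ho1⟩ := Subtype.ext (le_antisymm hle hge)
    calc H₀ t = ι₁ (ι₁.symm (H₀ t)) := (ι₁.apply_symm_apply _).symm
      _ = f₁ κ.ord ho1 := by rw [huo]
  rw [hH₀t] at heq
  have hg1 : g₁ (f₁ κ.ord ho1) = f₂ κ.ord (ho1.trans ho2) := by
    show f₂ (ι₁.symm (f₁ κ.ord ho1)).1 _ = _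
    exact (fun a b (ha : a < κ.ord + 2) (hb : b < κ.ord + 2) (e : a = b) => by subst e; rfl :
      ∀ a b ha hb, a = b → f₂ a ha = f₂ b hb) _ _ _ _ (congrArg Subtype.val (hψf₁ _ _))
  have hg2 : g₂ (f₁ κ.ord ho1) = f₂ (κ.ord + 1) ho2 := by
    show (if (ι₁.symm (f₁ κ.ord ho1)).1 = κ.ord then _ else _) = _
    simp only [hψf₁, if_true, if_pos]
  rw [hg1, hg2] at heq
  have hfin : (⟨κ.ord, ho1.trans ho2⟩ : Set.Iio (κ.ord+2)) = ⟨κ.ord + 1, ho2⟩ :=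
    ι₂.injective heq
  exact absurd (congrArg Subtype.val hfin) (ne_of_lt ho1)
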